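/- For Hermitian positive semi-definite matrices X and Y, define W = ((X+Y)^†)^{1/2} [ (X+Y)/4 − X:Y ] ((X+Y)^†)^{1/2} and X∨Y = (X+Y)/2 + (X+Y)^{1/2} W^{1/2} (X+Y)^{1/2}. Then X∨Y ≥ X and X∨Y ≥ Y in the Loewner order. -/

import Mathlib

open scoped Matrix Matrix.Norms.L2Operator ComplexOrder

/-- The positive semidefinite square root of a positive semidefinite matrix
(the definition `Matrix.PosSemidef.sqrt` of Mathlib, December 2024, since removed). -/
noncomputable def Matrix.PosSemidef.sqrt {n 𝕜 : Type*} [Fintype n] [RCLike 𝕜] [DecidableEq n]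
    {A : Matrix n n 𝕜} (hA : A.PosSemidef) : Matrix n n 𝕜 :=
  hA.1.eigenvectorUnitary.1 * Matrix.diagonal ((↑) ∘ (√·) ∘ hA.1.eigenvalues) *
    (star hA.1.eigenvectorUnitary : Matrix n n 𝕜)

namespace SqrtAux

open scoped MatrixOrder in
lemma sqrt_eq_cfc {n : ℕ} {A : Matrix (Fin n) (Fin n) ℂ} (hA : A.PosSemidef) :
    hA.sqrt = CFC.sqrt A := by
  rw [CFC.sqrt_eq_real_sqrt A hA.nonneg, cfcₙ_eq_cfc, hA.1.cfc_eq]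
  rfl

end SqrtAux

namespace Matrix.PosSemidef

open scoped MatrixOrder in
lemma posSemidef_sqrt {n : ℕ} {A : Matrix (Fin n) (Fin n) ℂ} (hA : A.PosSemidef) :
    hA.sqrt.PosSemidef := by
  rw [SqrtAux.sqrt_eq_cfc]; exact Matrix.nonneg_iff_posSemidef.mp (CFC.sqrt_nonneg A)

open scoped MatrixOrder in
lemma sqrt_mul_self {n : ℕ} {A : Matrix (Fin n) (Fin n) ℂ} (hA : A.PosSemidef) :
    hA.sqrt * hA.sqrt = A := by
  rw [SqrtAux.sqrt_eq_cfc]; exact CFC.sqrt_mul_sqrt_self A hA.nonneg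

open scoped MatrixOrder in
lemma eq_of_sq_eq_sq {n : ℕ} {A B : Matrix (Fin n) (Fin n) ℂ} (hA : A.PosSemidef)
    (hB : B.PosSemidef) (h : A ^ 2 = B ^ 2) : A = B := by
  rw [pow_two, pow_two] at h
  exact (CFC.mul_self_eq_mul_self_iff A B hA.nonneg hB.nonneg).mp h

open scoped MatrixOrder in
lemma eq_sqrt_of_sq_eq {n : ℕ} {A B : Matrix (Fin n) (Fin n) ℂ} (hA : A.PosSemidef)
    (hB : B.PosSemidef) (h : A ^ 2 = B) : A = hB.sqrt := by
  rw [SqrtAux.sqrt_eq_cfc]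
  rw [pow_two] at h
  exact (CFC.sqrt_unique h hA.nonneg).symm

end Matrix.PosSemidef

/-- `MPInv A B` means `B` is the Moore-Penrose inverse of `A`. -/
def MPInv {n : ℕ} (A B : Matrix (Fin n) (Fin n) ℂ) : Prop :=
  A * B * A = A ∧ B * A * B = B ∧ (A * B).IsHermitian ∧ (B * A).IsHermitian

namespace SupAux

variable {n : ℕ}

lemma mulconj_add_eq_zero {M N : Matrix (Fin n) (Fin n) ℂ}
    (h : M * Mᴴ + N * Nᴴ = 0) : M = 0 := by
  ext i j
  have h1 : (M * Mᴴ) i i + (N * Nᴴ) i i = 0 := by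
    have := congrFun (congrFun h i) i
    simpa using this
  have e1 : ∀ (M : Matrix (Fin n) (Fin n) ℂ) i,
      (M * Mᴴ) i i = ((∑ k, Complex.normSq (M i k) : ℝ) : ℂ) := by
    intro M i
    rw [Matrix.mul_apply]
    push_cast
    refine Finset.sum_congr rfl fun k _ => ?_
    rw [Matrix.conjTranspose_apply, Complex.star_def, Complex.mul_conj]
  rw [e1 M, e1 N] at h1
  have h2 : (∑ k, Complex.normSq (M i k)) + (∑ k, Complex.normSq (N i k)) = 0 := by
    exact_mod_cast h1
  have hM0 : (∑ k, Complex.normSq (M i k)) = 0 := by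
    have hMn : 0 ≤ ∑ k, Complex.normSq (M i k) :=
      Finset.sum_nonneg fun k _ => Complex.normSq_nonneg _
    have hNn : 0 ≤ ∑ k, Complex.normSq (N i k) :=
      Finset.sum_nonneg fun k _ => Complex.normSq_nonneg _
    linarith
  have := (Finset.sum_eq_zero_iff_of_nonneg
    (fun k _ => Complex.normSq_nonneg (M i k))).mp hM0 j (Finset.mem_univ j)
  simpa using Complex.normSq_eq_zero.mp this

lemma commute_sqrt {A M : Matrix (Fin n) (Fin n) ℂ} (hA : A.PosSemidef)
    (h : M * A = A * M) : M * hA.sqrt = hA.sqrt * M := by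
  set U : Matrix (Fin n) (Fin n) ℂ := (hA.1.eigenvectorUnitary : Matrix (Fin n) (Fin n) ℂ) with hUdef
  have hU1 : U * star U = 1 := Matrix.mem_unitaryGroup_iff.mp hA.1.eigenvectorUnitary.2
  have hU2 : star U * U = 1 := Matrix.mem_unitaryGroup_iff'.mp hA.1.eigenvectorUnitary.2
  set N : Matrix (Fin n) (Fin n) ℂ := star U * M * U with hNdef
  have conj_mul : ∀ P Q : Matrix (Fin n) (Fin n) ℂ,
      (U * P * star U) * (U * Q * star U) = U * (P * Q) * star U := by
    intro P Q
    calc (U * P * star U) * (U * Q * star U)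
        = U * P * (star U * U) * Q * star U := by simp only [Matrix.mul_assoc]
      _ = U * (P * Q) * star U := by rw [hU2]; simp only [Matrix.mul_assoc, Matrix.mul_one]
  have hMN : U * N * star U = M := by
    rw [hNdef]
    simp only [← Matrix.mul_assoc]
    rw [hU1, Matrix.one_mul, Matrix.mul_assoc, hU1, Matrix.mul_one]
  set d : Fin n → ℝ := hA.1.eigenvalues with hddef
  set D : Matrix (Fin n) (Fin n) ℂ := Matrix.diagonal (RCLike.ofReal ∘ d) with hDdef
  have hspec : A = U * D * star U := hA.1.spectral_theorem
  have hND : N * D = D * N := by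
    have hAD : A * U = U * D := by
      conv_lhs => rw [hspec]
      rw [Matrix.mul_assoc, hU2, Matrix.mul_one]
    have hDA : star U * A = D * star U := by
      conv_lhs => rw [hspec]
      simp only [← Matrix.mul_assoc]
      rw [hU2, Matrix.one_mul]
    calc N * D = star U * M * (U * D) := by rw [hNdef]; simp only [Matrix.mul_assoc]
      _ = star U * M * (A * U) := by rw [hAD]
      _ = star U * (M * A) * U := by simp only [Matrix.mul_assoc]
      _ = star U * (A * M) * U := by rw [h]
      _ = (star U * A) * (M * U) := by simp only [Matrix.mul_assoc]
      _ = D * (star U * M * U) := by rw [hDA]; simp only [Matrix.mul_assoc]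
      _ = D * N := by rw [← hNdef]
  have hentry : ∀ i j, N i j * (d j : ℂ) = (d i : ℂ) * N i j := by
    intro i j
    have := congrFun (congrFun hND i) j
    simpa [hDdef, Matrix.mul_diagonal, Matrix.diagonal_mul] using this
  set E : Matrix (Fin n) (Fin n) ℂ := Matrix.diagonal ((↑) ∘ Real.sqrt ∘ d) with hEdef
  have hNE : N * E = E * N := by
    ext i j
    simp only [hEdef, Matrix.mul_diagonal, Matrix.diagonal_mul, Function.comp_apply]
    rcases eq_or_ne (N i j) 0 with h0 | h0
    · simp [h0]
    · have heq : d j = d i := by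
        have h3 : N i j * (d j : ℂ) = N i j * (d i : ℂ) := by
          rw [hentry i j, mul_comm]
        exact_mod_cast mul_left_cancel₀ h0 h3
      rw [heq, mul_comm]
  have hsq : hA.sqrt = U * E * star U := rfl
  rw [hsq, ← hMN, conj_mul, conj_mul, hNE]


variable {n : ℕ}

lemma abs_psd {B W : Matrix (Fin n) (Fin n) ℂ} (hB : B.IsHermitian) (hW : W.PosSemidef)
    (h : W * W = B * B) : (W - B).PosSemidef ∧ (W + B).PosSemidef := by
  set U : Matrix (Fin n) (Fin n) ℂ := (hB.eigenvectorUnitary : Matrix (Fin n) (Fin n) ℂ) with hUdef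
  have hU1 : U * star U = 1 := Matrix.mem_unitaryGroup_iff.mp hB.eigenvectorUnitary.2
  have hU2 : star U * U = 1 := Matrix.mem_unitaryGroup_iff'.mp hB.eigenvectorUnitary.2
  have conj_mul : ∀ P Q : Matrix (Fin n) (Fin n) ℂ,
      (U * P * star U) * (U * Q * star U) = U * (P * Q) * star U := by
    intro P Q
    calc (U * P * star U) * (U * Q * star U)
        = U * P * (star U * U) * Q * star U := by simp only [Matrix.mul_assoc]
      _ = U * (P * Q) * star U := by rw [hU2]; simp only [Matrix.mul_assoc, Matrix.mul_one]
  set d : Fin n → ℝ := hB.eigenvalues with hddef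
  set D : Matrix (Fin n) (Fin n) ℂ := Matrix.diagonal (RCLike.ofReal ∘ d) with hDdef
  have hspec : B = U * D * star U := hB.spectral_theorem
  set E : Matrix (Fin n) (Fin n) ℂ := Matrix.diagonal (fun i => ((|d i| : ℝ) : ℂ)) with hEdef
  set C : Matrix (Fin n) (Fin n) ℂ := U * E * star U with hCdef
  have hE_psd : E.PosSemidef := by
    refine Matrix.posSemidef_diagonal_iff.mpr fun i => ?_
    exact_mod_cast abs_nonneg (d i)
  have hC_psd : C.PosSemidef := by
    have := hE_psd.mul_mul_conjTranspose_same U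
    simpa [← Matrix.star_eq_conjTranspose, hCdef] using this
  have hCC : C * C = B * B := by
    rw [hCdef, conj_mul, hspec, conj_mul]
    rw [hEdef, hDdef, Matrix.diagonal_mul_diagonal, Matrix.diagonal_mul_diagonal]
    refine congrArg₂ _ (congrArg₂ _ rfl (congrArg _ (funext fun i => ?_))) rfl
    simp only [Function.comp_apply]
    rw [← Complex.ofReal_mul, abs_mul_abs_self, Complex.ofReal_mul]; rfl
  have hWC : W = C := hW.eq_of_sq_eq_sq hC_psd (by rw [pow_two, pow_two, h, hCC])
  have hdiagpsd : ∀ (f : Fin n → ℝ), (∀ i, 0 ≤ f i) →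
      (U * Matrix.diagonal (fun i => ((f i : ℝ) : ℂ)) * star U).PosSemidef := by
    intro f hf
    have hfpsd : (Matrix.diagonal (fun i => ((f i : ℝ) : ℂ))).PosSemidef :=
      Matrix.posSemidef_diagonal_iff.mpr fun i => by exact_mod_cast hf i
    have := hfpsd.mul_mul_conjTranspose_same U
    simpa [← Matrix.star_eq_conjTranspose] using this
  constructor
  · have : W - B = U * Matrix.diagonal (fun i => ((|d i| - d i : ℝ) : ℂ)) * star U := by
      rw [hWC, hCdef, hspec, ← Matrix.sub_mul, ← Matrix.mul_sub]
      congr 2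
      rw [hEdef, hDdef, Matrix.diagonal_sub]
      refine congrArg _ (funext fun i => ?_)
      simp [Complex.ofReal_sub]
    rw [this]
    exact hdiagpsd _ fun i => by simp [abs_nonneg, neg_abs_le, sub_nonneg, le_abs_self]
  · have : W + B = U * Matrix.diagonal (fun i => ((|d i| + d i : ℝ) : ℂ)) * star U := by
      rw [hWC, hCdef, hspec, ← Matrix.add_mul, ← Matrix.mul_add]
      congr 2
      rw [hEdef, hDdef, Matrix.diagonal_add]
      refine congrArg _ (funext fun i => ?_)
      simp [Complex.ofReal_add]
    rw [this]
    exact hdiagpsd _ fun i => by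
      have := neg_abs_le (d i); linarith [le_abs_self (d i), abs_nonneg (d i)]


variable {n : ℕ}

theorem main {n : ℕ} (X Y Sd Sdh Wh : Matrix (Fin n) (Fin n) ℂ)
    (hX : X.PosSemidef) (hY : Y.PosSemidef)
    (h1 : (X + Y) * Sd * (X + Y) = X + Y) (h2 : Sd * (X + Y) * Sd = Sd)
    (h3 : ((X + Y) * Sd).IsHermitian) (h4 : (Sd * (X + Y)).IsHermitian)
    (hSdh : Sdh.PosSemidef) (hSdh2 : Sdh * Sdh = Sd)
    (hWh : Wh.PosSemidef)
    (hWh2 : Wh * Wh = Sdh * ((4 : ℂ)⁻¹ • (X + Y) - X * Sd * Y) * Sdh) :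
    ((2 : ℂ)⁻¹ • (X + Y) + (hX.add hY).sqrt * Wh * (hX.add hY).sqrt - X).PosSemidef ∧
    ((2 : ℂ)⁻¹ • (X + Y) + (hX.add hY).sqrt * Wh * (hX.add hY).sqrt - Y).PosSemidef := by
  have hS : (X + Y).PosSemidef := hX.add hY
  have hSdpsd : Sd.PosSemidef := by
    have := Matrix.posSemidef_conjTranspose_mul_self Sdh
    rwa [hSdh.1.eq, hSdh2] at this
  have hSdherm : Sd.IsHermitian := hSdpsd.1
  have hPP : ((X + Y) * Sd) * ((X + Y) * Sd) = (X + Y) * Sd := by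
    rw [← Matrix.mul_assoc, h1]
  -- P fixes X and Y
  have hzX : ((1 : Matrix (Fin n) (Fin n) ℂ) - (X + Y) * Sd) * hX.sqrt = 0 ∧
      ((1 : Matrix (Fin n) (Fin n) ℂ) - (X + Y) * Sd) * hY.sqrt = 0 := by
    set Q : Matrix (Fin n) (Fin n) ℂ := 1 - (X + Y) * Sd with hQdef
    have hQS : Q * (X + Y) = 0 := by
      rw [hQdef, Matrix.sub_mul, Matrix.one_mul, h1, sub_self]
    have e : ∀ (Z : Matrix (Fin n) (Fin n) ℂ) (hZ : Z.PosSemidef),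
        (Q * hZ.sqrt) * (Q * hZ.sqrt)ᴴ = Q * Z * Qᴴ := by
      intro Z hZ
      rw [Matrix.conjTranspose_mul, hZ.posSemidef_sqrt.1.eq]
      calc Q * hZ.sqrt * (hZ.sqrt * Qᴴ) = Q * (hZ.sqrt * hZ.sqrt) * Qᴴ := by
            simp only [Matrix.mul_assoc]
        _ = Q * Z * Qᴴ := by rw [hZ.sqrt_mul_self]
    have key : (Q * hX.sqrt) * (Q * hX.sqrt)ᴴ + (Q * hY.sqrt) * (Q * hY.sqrt)ᴴ = 0 := by
      rw [e X hX, e Y hY, ← Matrix.add_mul, ← Matrix.mul_add, hQS, Matrix.zero_mul]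
    exact ⟨mulconj_add_eq_zero key, mulconj_add_eq_zero (by rwa [add_comm] at key)⟩
  have hfix : ∀ (Z : Matrix (Fin n) (Fin n) ℂ) (hZ : Z.PosSemidef),
      ((1 : Matrix (Fin n) (Fin n) ℂ) - (X + Y) * Sd) * hZ.sqrt = 0 →
      (X + Y) * Sd * Z = Z := by
    intro Z hZ h0
    rw [Matrix.sub_mul, Matrix.one_mul, sub_eq_zero] at h0
    calc (X + Y) * Sd * Z = (X + Y) * Sd * (hZ.sqrt * hZ.sqrt) := by rw [hZ.sqrt_mul_self]
      _ = ((X + Y) * Sd * hZ.sqrt) * hZ.sqrt := by simp only [Matrix.mul_assoc]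
      _ = Z := by rw [← h0, hZ.sqrt_mul_self]
  have hPX : (X + Y) * Sd * X = X := hfix X hX hzX.1
  have hPY : (X + Y) * Sd * Y = Y := hfix Y hY hzX.2
  have hXP : X * ((X + Y) * Sd) = X := by
    have := congrArg Matrix.conjTranspose hPX
    rwa [Matrix.conjTranspose_mul, hX.1.eq, h3.eq] at this
  have hYP : Y * ((X + Y) * Sd) = Y := by
    have := congrArg Matrix.conjTranspose hPY
    rwa [Matrix.conjTranspose_mul, hY.1.eq, h3.eq] at this
  have hcomm : Sd * (X + Y) = (X + Y) * Sd := by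
    have h5 : ((X + Y) * Sd)ᴴ = (X + Y) * Sd := h3.eq
    rwa [Matrix.conjTranspose_mul, hSdherm.eq, hS.1.eq] at h5
  have hXSdS : X * Sd * (X + Y) = X := by
    rw [Matrix.mul_assoc, hcomm, hXP]
  have hsym : Y * Sd * X = X * Sd * Y := by
    have e1 : X * Sd * Y = X - X * Sd * X := by
      have h6 : X * Sd * (X + Y) = X * Sd * X + X * Sd * Y := by rw [Matrix.mul_add]
      rw [hXSdS] at h6
      exact eq_sub_of_add_eq' h6.symm
    have e2 : Y * Sd * X = X - X * Sd * X := by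
      have h7 : (X + Y) * Sd * X = X * Sd * X + Y * Sd * X := by
        rw [Matrix.add_mul, Matrix.add_mul]
      rw [hPX] at h7
      exact eq_sub_of_add_eq' h7.symm
    rw [e1, e2]
  have expand : (X + Y) * Sd * (X + Y) - (X - Y) * Sd * (X - Y)
      = (X * Sd * Y + Y * Sd * X) + (X * Sd * Y + Y * Sd * X) := by noncomm_ring
  have inner : (4 : ℂ)⁻¹ • (X + Y) - X * Sd * Y = (4 : ℂ)⁻¹ • ((X - Y) * Sd * (X - Y)) := by
    rw [h1, hsym] at expand
    have e3 : (X - Y) * Sd * (X - Y)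
        = (X + Y) - ((X * Sd * Y + X * Sd * Y) + (X * Sd * Y + X * Sd * Y)) := by
      rw [← expand]; abel
    rw [e3]
    module
  have hSdh_eq : Sdh = hSdpsd.sqrt := hSdh.eq_sqrt_of_sq_eq hSdpsd (by rw [pow_two, hSdh2])
  have c1 : Sd * hS.sqrt = hS.sqrt * Sd := commute_sqrt hS hcomm
  have c2 : hS.sqrt * Sdh = Sdh * hS.sqrt := by
    rw [hSdh_eq]; exact commute_sqrt hSdpsd c1.symm
  have hKK : (hS.sqrt * Sdh) * (hS.sqrt * Sdh) = (X + Y) * Sd := by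
    calc (hS.sqrt * Sdh) * (hS.sqrt * Sdh) = hS.sqrt * (Sdh * hS.sqrt) * Sdh := by
          simp only [Matrix.mul_assoc]
      _ = hS.sqrt * (hS.sqrt * Sdh) * Sdh := by rw [← c2]
      _ = (hS.sqrt * hS.sqrt) * (Sdh * Sdh) := by simp only [Matrix.mul_assoc]
      _ = (X + Y) * Sd := by rw [hS.sqrt_mul_self, hSdh2]
  have hK_psd : (hS.sqrt * Sdh).PosSemidef := by
    have c3 : hS.sqrt * hSdh.sqrt = hSdh.sqrt * hS.sqrt := commute_sqrt hSdh c2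
    have hpsd := (hS.posSemidef_sqrt).conjTranspose_mul_mul_same hSdh.sqrt
    rw [hSdh.posSemidef_sqrt.1.eq] at hpsd
    have e : hSdh.sqrt * hS.sqrt * hSdh.sqrt = hS.sqrt * Sdh := by
      rw [← c3, Matrix.mul_assoc, hSdh.sqrt_mul_self]
    rwa [e] at hpsd
  have hP_psd : ((X + Y) * Sd).PosSemidef := by
    have := Matrix.posSemidef_conjTranspose_mul_self ((X + Y) * Sd)
    rwa [h3.eq, hPP] at this
  have hK_eq_P : hS.sqrt * Sdh = (X + Y) * Sd :=
    hK_psd.eq_of_sq_eq_sq hP_psd (by rw [pow_two, pow_two, hKK, hPP])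
  have key2 : hS.sqrt * (Sdh * (X - Y) * Sdh) * hS.sqrt = X - Y := by
    calc hS.sqrt * (Sdh * (X - Y) * Sdh) * hS.sqrt
        = (hS.sqrt * Sdh) * (X - Y) * (Sdh * hS.sqrt) := by simp only [Matrix.mul_assoc]
      _ = ((X + Y) * Sd) * (X - Y) * ((X + Y) * Sd) := by rw [← c2, hK_eq_P]
      _ = X - Y := by
        rw [Matrix.mul_sub, hPX, hPY, Matrix.sub_mul, hXP, hYP]
  set Bm : Matrix (Fin n) (Fin n) ℂ := (2 : ℂ)⁻¹ • (Sdh * (X - Y) * Sdh) with hBmdef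
  have hinner : (Sdh * (X - Y) * Sdh).IsHermitian := by
    have hXY : (X - Y).IsHermitian := hX.1.sub hY.1
    show _ᴴ = _
    rw [Matrix.conjTranspose_mul, Matrix.conjTranspose_mul, hSdh.1.eq, hXY.eq,
      ← Matrix.mul_assoc]
  have hBherm : Bm.IsHermitian := by
    show Bmᴴ = Bm
    rw [hBmdef, Matrix.conjTranspose_smul, hinner.eq]
    congr 1
    simp
  have hB2 : Wh * Wh = Bm * Bm := by
    have e1 : Bm * Bm = (4 : ℂ)⁻¹ • ((Sdh * (X - Y) * Sdh) * (Sdh * (X - Y) * Sdh)) := by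
      rw [hBmdef, Matrix.smul_mul, Matrix.mul_smul, smul_smul]
      norm_num
    have e2 : (Sdh * (X - Y) * Sdh) * (Sdh * (X - Y) * Sdh)
        = Sdh * ((X - Y) * Sd * (X - Y)) * Sdh := by
      simp only [Matrix.mul_assoc]
      rw [← Matrix.mul_assoc Sdh Sdh, hSdh2]
    rw [hWh2, inner, e1, e2, Matrix.mul_smul, Matrix.smul_mul]
  obtain ⟨hsub, hadd⟩ := abs_psd hBherm hWh hB2
  have hRB : hS.sqrt * Bm * hS.sqrt = (2 : ℂ)⁻¹ • (X - Y) := by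
    rw [hBmdef, Matrix.mul_smul, Matrix.smul_mul, key2]
  have hRherm : hS.sqrtᴴ = hS.sqrt := hS.posSemidef_sqrt.1.eq
  have hss : (hX.add hY).sqrt = hS.sqrt := rfl
  constructor
  · have hpsd := hsub.conjTranspose_mul_mul_same hS.sqrt
    rw [hRherm] at hpsd
    have heq : (2 : ℂ)⁻¹ • (X + Y) + (hX.add hY).sqrt * Wh * (hX.add hY).sqrt - X
        = hS.sqrt * (Wh - Bm) * hS.sqrt := by
      rw [hss, Matrix.mul_sub, Matrix.sub_mul, hRB]
      module
    rw [heq]; exact hpsd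
  · have hpsd := hadd.conjTranspose_mul_mul_same hS.sqrt
    rw [hRherm] at hpsd
    have heq : (2 : ℂ)⁻¹ • (X + Y) + (hX.add hY).sqrt * Wh * (hX.add hY).sqrt - Y
        = hS.sqrt * (Wh + Bm) * hS.sqrt := by
      rw [hss, Matrix.mul_add, Matrix.add_mul, hRB]
      module
    rw [heq]; exact hpsd

end SupAux

/-- X∨Y is a common upper bound of X and Y in the Loewner order. -/
theorem sup_is_common_upper_bound {n : ℕ} (X Y Sd Sdh Wh : Matrix (Fin n) (Fin n) ℂ)
    (hX : X.PosSemidef) (hY : Y.PosSemidef) (hSd : MPInv (X + Y) Sd)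
    (hSdh : Sdh.PosSemidef) (hSdh2 : Sdh * Sdh = Sd)
    (hWh : Wh.PosSemidef)
    (hWh2 : Wh * Wh = Sdh * ((4 : ℂ)⁻¹ • (X + Y) - X * Sd * Y) * Sdh) :
    ((2 : ℂ)⁻¹ • (X + Y) + (hX.add hY).sqrt * Wh * (hX.add hY).sqrt - X).PosSemidef ∧
    ((2 : ℂ)⁻¹ • (X + Y) + (hX.add hY).sqrt * Wh * (hX.add hY).sqrt - Y).PosSemidef := by
  obtain ⟨h1, h2, h3, h4⟩ := hSd
  exact SupAux.main X Y Sd Sdh Wh hX hY h1 h2 h3 h4 hSdh hSdh2 hWh hWh2
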